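/- For a t-distributed random variable with m degrees of freedom, density t_m and upper tail T̃_m, for every t > 0 one has T̃_m(t) < (t_m(t)/t)·(1 + t²/m). -/

import Mathlib

open MeasureTheory Set Filter ENNReal

/-- Density of Student's t-distribution with `m` degrees of freedom. -/
noncomputable def tPDF (m : ℕ) (t : ℝ) : ℝ :=
  Real.Gamma (((m : ℝ) + 1) / 2) / (Real.sqrt (Real.pi * m) * Real.Gamma ((m : ℝ) / 2)) *
    (1 + t ^ 2 / m) ^ (-(((m : ℝ) + 1) / 2))

/-- Upper tail function of Student's t-distribution with `m` degrees of freedom. -/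
noncomputable def tTail (m : ℕ) (t : ℝ) : ℝ := ∫ s in Set.Ioi t, tPDF m s

/-- Mill's ratio type bound for Student's t-distribution. -/
theorem stmt_3 (m : ℕ) (hm : 1 ≤ m) (t : ℝ) (ht : 0 < t) :
    tTail m t < tPDF m t / t * (1 + t ^ 2 / m) := by
  have hM : (1:ℝ) ≤ (m:ℝ) := by exact_mod_cast hm
  have hM0 : (0:ℝ) < (m:ℝ) := lt_of_lt_of_le one_pos hM
  set M : ℝ := (m:ℝ) with hMdef
  set p : ℝ := -((M+1)/2) with hp
  set C : ℝ := Real.Gamma ((M+1)/2) / (Real.sqrt (Real.pi * M) * Real.Gamma (M/2)) with hCdef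
  have hCpos : 0 < C := by
    apply div_pos (Real.Gamma_pos_of_pos (by linarith))
    exact mul_pos (Real.sqrt_pos.2 (mul_pos Real.pi_pos hM0)) (Real.Gamma_pos_of_pos (by linarith))
  have hb : ∀ s : ℝ, 0 < 1 + s^2/M := fun s => by positivity
  have hfdef : ∀ s, tPDF m s = C * (1 + s^2/M)^p := fun s => rfl
  have hfpos : ∀ s : ℝ, 0 < tPDF m s := fun s => by
    rw [hfdef]; exact mul_pos hCpos (Real.rpow_pos_of_pos (hb s) p)
  have hcont : Continuous (tPDF m) := by
    have : Continuous fun s : ℝ => C * (1 + s^2/M)^p := by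
      apply continuous_const.mul
      exact Continuous.rpow_const (by continuity) (fun x => Or.inl (ne_of_gt (hb x)))
    have he : tPDF m = fun s : ℝ => C * (1 + s^2/M)^p := funext hfdef
    rw [he]; exact this
  set h : ℝ → ℝ := fun s => tPDF m s * ((1 + s^2/M)/s) with hhdef
  -- derivative
  have hderiv : ∀ s ∈ Ioi t, HasDerivAt h (-(tPDF m s * (1 + s^2)/s^2)) s := by
    intro s hs
    have hs0 : (0:ℝ) < s := ht.trans hs
    have hbne : (1 + s^2/M) ≠ 0 := ne_of_gt (hb s)
    have hB : HasDerivAt (fun x : ℝ => 1 + x^2/M) (2*s/M) s := by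
      have h1 : HasDerivAt (fun x : ℝ => x^2) (2*s) s := by
        simpa using (hasDerivAt_pow 2 s)
      simpa using (h1.div_const M).const_add 1
    have hF : HasDerivAt (tPDF m) (C * (2*s/M * p * (1 + s^2/M)^(p-1))) s := by
      have h2 := (hB.rpow_const (p := p) (Or.inl hbne)).const_mul C
      have he : tPDF m = fun s : ℝ => C * (1 + s^2/M)^p := funext hfdef
      rw [he]
      exact h2
    have hU : HasDerivAt (fun x : ℝ => (1 + x^2/M)/x) ((2*s/M * s - (1+s^2/M)*1)/s^2) s :=
      hB.div (hasDerivAt_id s) (ne_of_gt hs0)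
    have hH := hF.mul hU
    refine hH.congr_deriv ?_
    rw [hfdef, Real.rpow_sub_one hbne, hp]
    field_simp
    ring
  -- tendsto 0
  have htend : Tendsto h atTop (nhds 0) := by
    apply squeeze_zero' (g := fun s => C / s)
    · filter_upwards [eventually_ge_atTop (1:ℝ)] with s hs1
      have hs0 : (0:ℝ) < s := lt_of_lt_of_le one_pos hs1
      exact mul_nonneg (hfpos s).le (div_nonneg (hb s).le hs0.le)
    · filter_upwards [eventually_ge_atTop (1:ℝ)] with s hs1
      have hs0 : (0:ℝ) < s := lt_of_lt_of_le one_pos hs1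
      have hbne : (1 + s^2/M) ≠ 0 := ne_of_gt (hb s)
      have h1 : h s = C * (1+s^2/M)^(p+1) / s := by
        rw [hhdef]
        simp only
        rw [hfdef, Real.rpow_add_one hbne]
        field_simp
      rw [h1]
      have h2 : (1+s^2/M)^(p+1) ≤ 1 := by
        apply Real.rpow_le_one_of_one_le_of_nonpos
        · have := div_nonneg (sq_nonneg s) hM0.le
          linarith
        · rw [hp]; linarith
      have h3 : C * (1+s^2/M)^(p+1) ≤ C * 1 := mul_le_mul_of_nonneg_left h2 hCpos.le
      calc C * (1+s^2/M)^(p+1) / s ≤ C * 1 / s := (div_le_div_iff_of_pos_right hs0).2 h3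
        _ = C / s := by ring
    · have := tendsto_inv_atTop_zero (𝕜 := ℝ)
      have h2 := this.const_mul C
      simpa [div_eq_mul_inv] using h2
  -- integrability of tPDF on Ioi t
  have hint_f : IntegrableOn (tPDF m) (Ioi t) := by
    have hmaj : IntegrableOn (fun s : ℝ => C*M * s ^ (-2:ℝ)) (Ioi t) :=
      (integrableOn_Ioi_rpow_of_lt (by norm_num) ht).const_mul _
    apply Integrable.mono' hmaj hcont.aestronglyMeasurable.restrict
    filter_upwards [ae_restrict_mem measurableSet_Ioi] with s hs
    have hs0 : (0:ℝ) < s := ht.trans hs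
    rw [Real.norm_eq_abs, abs_of_pos (hfpos s)]
    have hs2 : s ^ (-2:ℝ) = (s^2)⁻¹ := by
      rw [show (-2:ℝ) = -((2:ℕ):ℝ) by norm_num, Real.rpow_neg hs0.le, Real.rpow_natCast]
    have h1 : tPDF m s ≤ C * (1+s^2/M)^(-1:ℝ) := by
      rw [hfdef]
      apply mul_le_mul_of_nonneg_left ?_ hCpos.le
      apply Real.rpow_le_rpow_of_exponent_le
        (by have := div_nonneg (sq_nonneg s) hM0.le; linarith)
      rw [hp]; linarith
    have h2 : (1+s^2/M)^(-1:ℝ) ≤ M * (s^2)⁻¹ := by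
      rw [Real.rpow_neg_one]
      have hsq : (0:ℝ) < s^2/M := by positivity
      have h3 : (1+s^2/M)⁻¹ ≤ (s^2/M)⁻¹ := by
        apply inv_anti₀ hsq
        linarith
      calc (1+s^2/M)⁻¹ ≤ (s^2/M)⁻¹ := h3
        _ = M * (s^2)⁻¹ := by
          rw [inv_div, div_eq_mul_inv]
    calc tPDF m s ≤ C * (1+s^2/M)^(-1:ℝ) := h1
      _ ≤ C * (M * (s^2)⁻¹) := mul_le_mul_of_nonneg_left h2 hCpos.le
      _ = C*M * s ^ (-2:ℝ) := by rw [hs2]; ring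
  -- integrability of tPDF/s^2 on Ioi t
  have hint_g : IntegrableOn (fun s => tPDF m s / s^2) (Ioi t) := by
    apply Integrable.mono' (hint_f.const_mul (t^2)⁻¹)
    · apply ContinuousOn.aestronglyMeasurable ?_ measurableSet_Ioi
      apply ContinuousOn.div hcont.continuousOn (continuous_pow 2).continuousOn
      intro x hx
      exact pow_ne_zero 2 (ne_of_gt (ht.trans hx))
    filter_upwards [ae_restrict_mem measurableSet_Ioi] with s hs
    have hs0 : (0:ℝ) < s := ht.trans hs
    have hpos : 0 < tPDF m s / s^2 := div_pos (hfpos s) (by positivity)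
    rw [Real.norm_eq_abs, abs_of_pos hpos]
    have hts : t < s := hs
    have ht2 : t^2 ≤ s^2 := by nlinarith
    calc tPDF m s / s^2 ≤ tPDF m s / t^2 := by
          apply div_le_div_of_nonneg_left (hfpos s).le (by positivity) ht2
      _ = (t^2)⁻¹ * tPDF m s := by ring
  -- integrability of the derivative
  have heqOn : ∀ s ∈ Ioi t, -(tPDF m s + tPDF m s / s^2) = -(tPDF m s * (1 + s^2)/s^2) := by
    intro s hs
    have hs0 : (0:ℝ) < s := ht.trans hs
    field_simp
    ring
  have hint_h' : IntegrableOn (fun s => -(tPDF m s * (1 + s^2)/s^2)) (Ioi t) := by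
    apply IntegrableOn.congr_fun ((hint_f.add hint_g).neg) heqOn measurableSet_Ioi
  -- continuity of h on Ici t
  have hcont_h : ContinuousWithinAt h (Ici t) t := by
    have hc1 : Continuous fun x : ℝ => 1 + x^2/M := by fun_prop
    have : ContinuousAt h t := by
      apply ContinuousAt.mul hcont.continuousAt
      exact ContinuousAt.div hc1.continuousAt continuousAt_id (ne_of_gt ht)
    exact this.continuousWithinAt
  -- FTC
  have hFTC := integral_Ioi_of_hasDerivAt_of_tendsto hcont_h hderiv hint_h' htend
  rw [← setIntegral_congr_fun measurableSet_Ioi heqOn, integral_neg,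
      integral_add hint_f hint_g, zero_sub, neg_inj] at hFTC
  -- positivity of the extra term
  have hpos2 : 0 < ∫ s in Ioi t, tPDF m s / s^2 := by
    have hnn : 0 ≤ᵐ[volume.restrict (Ioi t)] fun s => tPDF m s / s^2 := by
      filter_upwards [ae_restrict_mem measurableSet_Ioi] with s hs
      have hs0 : (0:ℝ) < s := ht.trans hs
      exact (div_pos (hfpos s) (by positivity)).le
    rw [setIntegral_pos_iff_support_of_nonneg_ae hnn hint_g]
    have hsub : Ioi t ⊆ Function.support (fun s => tPDF m s / s^2) ∩ Ioi t := by
      intro s hs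
      have hs0 : (0:ℝ) < s := ht.trans hs
      refine ⟨?_, hs⟩
      simp only [Function.mem_support]
      exact ne_of_gt (div_pos (hfpos s) (by positivity))
    calc (0:ℝ≥0∞) < volume (Ioi t) := by simp [Real.volume_Ioi]
      _ ≤ _ := measure_mono hsub
  -- conclude
  have hht : h t = tPDF m t / t * (1 + t^2/M) := by
    simp only [hhdef]
    ring
  have hgoal : (1 : ℝ) + t ^ 2 / (m:ℝ) = 1 + t^2/M := rfl
  rw [hgoal, ← hht, ← hFTC]
  have htt : tTail m t = ∫ s in Ioi t, tPDF m s := rfl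
  rw [htt]
  linarith [hpos2]
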